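/- Let n ≥ 6 and let Γ_1,…,Γ_{n−2} be 3-element subsets of N = {1,…,n} such that every element of N has valence 2 or 3 and condition (‡) holds. Let B be the set of the n−2 triples (black vertices) and W the set of valence-3 elements of N (white vertices), so |W| = n−6. For a subset Y ⊆ B ⊔ W let b(Y) = |Y ∩ B|, w(Y) = |Y ∩ W|, and let #(Y) be the number of valence-2 elements i of N whose two containing triples do not lie on the same side of the partition (Y, complement), plus the number of incidences (i, Γ_j) with i of valence 3 and i ∈ Γ_j such that exactly one of the white vertex i and the black vertex Γ_j lies in Y. Then for every Y with ∅ ≠ Y ≠ B ⊔ W: |(n−2)·w(Y) − (n−6)·b(Y)| < (n−4)·#(Y). -/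

import Mathlib

open Finset
open scoped Classical

/-- The valence of `i ∈ N = {1,…,n}`: the number of hyperedges `Γ_j` containing `i`. -/
def valence (n : ℕ) (Γ : ℕ → Finset ℕ) (i : ℕ) : ℕ :=
  ((Finset.Icc 1 (n - 2)).filter fun j => i ∈ Γ j).card

/-- `sharp n Γ YB YW` is `#(Y)` for `Y = (YB, YW)`: the number of valence-2 elements
whose two containing triples lie on different sides of the partition, plus the number
of incidences `(i, Γ_j)` with `i` of valence 3 and `i ∈ Γ_j` such that exactly one of
the white vertex `i` and the black vertex `Γ_j` lies in `Y`. -/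
noncomputable def sharp (n : ℕ) (Γ : ℕ → Finset ℕ) (YB YW : Finset ℕ) : ℕ :=
  ((Finset.Icc 1 n).filter fun i => valence n Γ i = 2 ∧
      (∃ j ∈ Finset.Icc 1 (n - 2), i ∈ Γ j ∧ j ∈ YB) ∧
      (∃ j ∈ Finset.Icc 1 (n - 2), i ∈ Γ j ∧ j ∉ YB)).card +
  (((Finset.Icc 1 n) ×ˢ (Finset.Icc 1 (n - 2))).filter fun p =>
      valence n Γ p.1 = 3 ∧ p.1 ∈ Γ p.2 ∧
      ((p.1 ∈ YW ∧ p.2 ∉ YB) ∨ (p.1 ∉ YW ∧ p.2 ∈ YB))).card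

lemma card_filter_product (s t : Finset ℕ) (p : ℕ × ℕ → Prop) [DecidablePred p] :
    ((s ×ˢ t).filter p).card = ∑ a ∈ s, (t.filter fun b => p (a, b)).card := by
  rw [Finset.card_filter, Finset.sum_product]
  exact Finset.sum_congr rfl fun a _ => (Finset.card_filter _ _).symm

lemma sum_deg (n : ℕ) (Γ : ℕ → Finset ℕ) (YB : Finset ℕ)
    (h : ∀ j ∈ YB, Γ j ⊆ Finset.Icc 1 n) (hc : ∀ j ∈ YB, (Γ j).card = 3) :
    ∑ i ∈ Finset.Icc 1 n, (YB.filter fun j => i ∈ Γ j).card = 3 * YB.card := by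
  calc ∑ i ∈ Finset.Icc 1 n, (YB.filter fun j => i ∈ Γ j).card
      = ∑ i ∈ Finset.Icc 1 n, ∑ j ∈ YB, if i ∈ Γ j then 1 else 0 :=
        Finset.sum_congr rfl fun i _ => Finset.card_filter _ _
    _ = ∑ j ∈ YB, ∑ i ∈ Finset.Icc 1 n, if i ∈ Γ j then 1 else 0 := Finset.sum_comm
    _ = ∑ j ∈ YB, (Γ j).card := by
        refine Finset.sum_congr rfl fun j hj => ?_
        rw [← Finset.card_filter, Finset.filter_mem_eq_inter,
          Finset.inter_eq_right.mpr (h j hj)]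
    _ = 3 * YB.card := by
        rw [Finset.sum_congr rfl (fun j hj => hc j hj), Finset.sum_const, smul_eq_mul, mul_comm]

lemma one_sided (n : ℕ) (hn : 6 ≤ n) (Γ : ℕ → Finset ℕ)
    (hsub : ∀ j ∈ Finset.Icc 1 (n - 2), Γ j ⊆ Finset.Icc 1 n)
    (hcard : ∀ j ∈ Finset.Icc 1 (n - 2), (Γ j).card = 3)
    (hval : ∀ i ∈ Finset.Icc 1 n, valence n Γ i = 2 ∨ valence n Γ i = 3)
    (hddag : ∀ S ⊆ Finset.Icc 1 (n - 2), S.Nonempty →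
      S.card + 2 ≤ (S.biUnion Γ).card)
    (YB YW : Finset ℕ)
    (hYB : YB ⊆ Finset.Icc 1 (n - 2))
    (hYW : YW ⊆ (Finset.Icc 1 n).filter fun i => valence n Γ i = 3)
    (hbw : YB.card + YW.card + 9 ≤ 2 * n)
    (hwpos : YB = ∅ → YW.Nonempty) :
    ((n : ℤ) - 2) * YW.card - ((n : ℤ) - 6) * YB.card <
      ((n : ℤ) - 4) * sharp n Γ YB YW := by
  classical
  set I := Finset.Icc 1 n with hI
  set J := Finset.Icc 1 (n - 2) with hJdef
  set d : ℕ → ℕ := fun i => (YB.filter fun j => i ∈ Γ j).card with hd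
  set e : ℕ → ℕ := fun i => ((J \ YB).filter fun j => i ∈ Γ j).card with he
  set Wset := I.filter (fun i => valence n Γ i = 3) with hWset
  set V2 := I.filter (fun i => valence n Γ i = 2) with hV2
  -- valence splits as d + e
  have hde : ∀ i, d i + e i = valence n Γ i := by
    intro i
    have hu : YB ∪ (J \ YB) = J := Finset.union_sdiff_of_subset hYB
    have hdisj : Disjoint (YB.filter fun j => i ∈ Γ j) ((J \ YB).filter fun j => i ∈ Γ j) :=
      Finset.disjoint_filter_filter (Finset.disjoint_sdiff)
    rw [hd, he, ← Finset.card_union_of_disjoint hdisj, ← Finset.filter_union, hu]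
    rfl
  have hsumd : ∑ i ∈ I, d i = 3 * YB.card :=
    sum_deg n Γ YB (fun j hj => hsub j (hYB hj)) (fun j hj => hcard j (hYB hj))
  have hdne : ∀ i, d i ≠ 0 ↔ ∃ j ∈ J, i ∈ Γ j ∧ j ∈ YB := by
    intro i
    constructor
    · intro h
      obtain ⟨j, hj⟩ := Finset.card_pos.mp (Nat.pos_of_ne_zero h)
      rw [Finset.mem_filter] at hj
      exact ⟨j, hYB hj.1, hj.2, hj.1⟩
    · rintro ⟨j, hjJ, hij, hjY⟩
      exact Finset.card_ne_zero_of_mem (Finset.mem_filter.mpr ⟨hjY, hij⟩)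
  have hene : ∀ i, e i ≠ 0 ↔ ∃ j ∈ J, i ∈ Γ j ∧ j ∉ YB := by
    intro i
    constructor
    · intro h
      obtain ⟨j, hj⟩ := Finset.card_pos.mp (Nat.pos_of_ne_zero h)
      rw [Finset.mem_filter, Finset.mem_sdiff] at hj
      exact ⟨j, hj.1.1, hj.2, hj.1.2⟩
    · rintro ⟨j, hjJ, hij, hjY⟩
      exact Finset.card_ne_zero_of_mem
        (Finset.mem_filter.mpr ⟨Finset.mem_sdiff.mpr ⟨hjJ, hjY⟩, hij⟩)
  -- abbreviations for the pieces
  set q1 := (V2.filter fun i => d i = 1).card with hq1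
  set q2 := (V2.filter fun i => d i = 2).card with hq2
  set s := ∑ i ∈ YW, d i with hs
  set ew := ∑ i ∈ YW, e i with hew
  set t' := ∑ i ∈ Wset \ YW, d i with ht'
  -- (A) sharp = q1 + ew + t'
  have hA : sharp n Γ YB YW = q1 + ew + t' := by
    have hfirst : ((Finset.Icc 1 n).filter fun i => valence n Γ i = 2 ∧
        (∃ j ∈ Finset.Icc 1 (n - 2), i ∈ Γ j ∧ j ∈ YB) ∧
        (∃ j ∈ Finset.Icc 1 (n - 2), i ∈ Γ j ∧ j ∉ YB)).card = q1 := by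
      rw [hq1]
      refine congrArg Finset.card ?_
      ext i
      simp only [Finset.mem_filter, hV2]
      constructor
      · rintro ⟨hiI, h2', hex1, hex2⟩
        have hd1 : d i ≠ 0 := (hdne i).mpr hex1
        have he1 : e i ≠ 0 := (hene i).mpr hex2
        have h2 := hde i
        exact ⟨⟨hiI, h2'⟩, by omega⟩
      · rintro ⟨⟨hiI, h2'⟩, hd1⟩
        have h2 := hde i
        exact ⟨hiI, h2', (hdne i).mp (by omega), (hene i).mp (by omega)⟩
    have hsecond : (((Finset.Icc 1 n) ×ˢ (Finset.Icc 1 (n - 2))).filter fun p =>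
        valence n Γ p.1 = 3 ∧ p.1 ∈ Γ p.2 ∧
        ((p.1 ∈ YW ∧ p.2 ∉ YB) ∨ (p.1 ∉ YW ∧ p.2 ∈ YB))).card = ew + t' := by
      rw [card_filter_product]
      have hzero : ∀ i ∈ I, i ∉ Wset → (J.filter fun j => valence n Γ i = 3 ∧ i ∈ Γ j ∧
          ((i ∈ YW ∧ j ∉ YB) ∨ (i ∉ YW ∧ j ∈ YB))).card = 0 := by
        intro i hi hni
        rw [Finset.card_eq_zero, Finset.filter_eq_empty_iff]
        intro j _ hc
        exact hni (Finset.mem_filter.mpr ⟨hi, hc.1⟩)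
      have hstep : ∑ i ∈ I, (J.filter fun j => valence n Γ i = 3 ∧ i ∈ Γ j ∧
          ((i ∈ YW ∧ j ∉ YB) ∨ (i ∉ YW ∧ j ∈ YB))).card
          = ∑ i ∈ Wset, (J.filter fun j => valence n Γ i = 3 ∧ i ∈ Γ j ∧
          ((i ∈ YW ∧ j ∉ YB) ∨ (i ∉ YW ∧ j ∈ YB))).card :=
        (Finset.sum_subset (Finset.filter_subset _ _) hzero).symm
      rw [hstep, ← Finset.sum_sdiff hYW]
      have hYWpart : ∀ i ∈ YW, (J.filter fun j => valence n Γ i = 3 ∧ i ∈ Γ j ∧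
          ((i ∈ YW ∧ j ∉ YB) ∨ (i ∉ YW ∧ j ∈ YB))).card = e i := by
        intro i hiY
        have h3 : valence n Γ i = 3 := (Finset.mem_filter.mp (hYW hiY)).2
        rw [he]
        refine congrArg Finset.card ?_
        ext j
        simp only [Finset.mem_filter, Finset.mem_sdiff]
        constructor
        · rintro ⟨hjJ, -, hig, hc⟩
          rcases hc with ⟨-, hnb⟩ | ⟨hni, -⟩
          · exact ⟨⟨hjJ, hnb⟩, hig⟩
          · exact absurd hiY hni
        · rintro ⟨⟨hjJ, hnb⟩, hig⟩
          exact ⟨hjJ, h3, hig, Or.inl ⟨hiY, hnb⟩⟩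
      have hWYpart : ∀ i ∈ Wset \ YW, (J.filter fun j => valence n Γ i = 3 ∧ i ∈ Γ j ∧
          ((i ∈ YW ∧ j ∉ YB) ∨ (i ∉ YW ∧ j ∈ YB))).card = d i := by
        intro i hiW
        rw [Finset.mem_sdiff] at hiW
        have h3 : valence n Γ i = 3 := (Finset.mem_filter.mp hiW.1).2
        have hni : i ∉ YW := hiW.2
        rw [hd]
        refine congrArg Finset.card ?_
        ext j
        simp only [Finset.mem_filter]
        constructor
        · rintro ⟨hjJ, -, hig, hc⟩
          rcases hc with ⟨hiY, -⟩ | ⟨-, hb⟩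
          · exact absurd hiY hni
          · exact ⟨hb, hig⟩
        · rintro ⟨hb, hig⟩
          exact ⟨hYB hb, h3, hig, Or.inr ⟨hni, hb⟩⟩
      rw [Finset.sum_congr rfl hYWpart, Finset.sum_congr rfl hWYpart, hew, ht']
      ring
    unfold sharp
    rw [hfirst, hsecond]
    omega
  -- (B) ew + s = 3 * w
  have hB : ew + s = 3 * YW.card := by
    rw [hew, hs, ← Finset.sum_add_distrib]
    have : ∀ i ∈ YW, e i + d i = 3 := by
      intro i hi
      have h3 : valence n Γ i = 3 := (Finset.mem_filter.mp (hYW hi)).2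
      have := hde i
      omega
    rw [Finset.sum_congr rfl this, Finset.sum_const, smul_eq_mul, mul_comm]
  -- (C) 3 * b = q1 + 2*q2 + s + t'
  have hC : 3 * YB.card = q1 + 2 * q2 + s + t' := by
    have hIsplit : V2 ∪ Wset = I := by
      ext i
      simp only [Finset.mem_union, hV2, hWset, Finset.mem_filter]
      constructor
      · rintro (h | h) <;> exact h.1
      · intro hi
        rcases hval i hi with h | h
        · exact Or.inl ⟨hi, h⟩
        · exact Or.inr ⟨hi, h⟩
    have hIdisj : Disjoint V2 Wset := by
      rw [Finset.disjoint_left]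
      intro i h2 h3
      have e2 : valence n Γ i = 2 := (Finset.mem_filter.mp h2).2
      have e3 : valence n Γ i = 3 := (Finset.mem_filter.mp h3).2
      omega
    have hsplit : ∑ i ∈ I, d i = ∑ i ∈ V2, d i + ∑ i ∈ Wset, d i := by
      rw [← hIsplit, Finset.sum_union hIdisj]
    have hV2sum : ∑ i ∈ V2, d i = q1 + 2 * q2 := by
      have hterm : ∀ i ∈ V2, d i = (if d i = 1 then 1 else 0) + (if d i = 2 then 2 else 0) := by
        intro i hi
        have h2 : valence n Γ i = 2 := (Finset.mem_filter.mp hi).2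
        have := hde i
        split_ifs <;> omega
      rw [Finset.sum_congr rfl hterm, Finset.sum_add_distrib, hq1, hq2,
        ← Finset.sum_filter, ← Finset.sum_filter, Finset.sum_const, Finset.sum_const]
      simp [mul_comm]
    have hWsum : ∑ i ∈ Wset, d i = t' + s := by
      rw [ht', hs, ← Finset.sum_sdiff hYW]
    rw [← hsumd, hsplit, hV2sum, hWsum]
    ring
  -- case YB = ∅
  rcases Finset.eq_empty_or_nonempty YB with hBe | hBne
  · have hb0 : YB.card = 0 := by rw [hBe]; rfl
    have hall : q1 + 2 * q2 + s + t' = 0 := by omega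
    have hsharp : sharp n Γ YB YW = 3 * YW.card := by omega
    have hw1 : 1 ≤ YW.card := Finset.card_pos.mpr (hwpos hBe)
    have hw1' : (1 : ℤ) ≤ (YW.card : ℤ) := by exact_mod_cast hw1
    have hn' : (6 : ℤ) ≤ (n : ℤ) := by exact_mod_cast hn
    rw [hsharp, hb0]
    push_cast
    have h2 : ((n : ℤ) - 4) * (3 * (YW.card : ℤ))
        = ((n : ℤ) - 2) * YW.card + (2 * (n : ℤ) - 10) * YW.card := by ring
    have h3 : (2 * (n : ℤ) - 10) * 1 ≤ (2 * (n : ℤ) - 10) * YW.card :=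
      mul_le_mul_of_nonneg_left hw1' (by linarith)
    linarith only [h2, h3, hn']
  -- case YB nonempty : the key bound q2 + s + 2 ≤ 2*b + w
  · set U := YB.biUnion Γ with hU
    have hUI : U ⊆ I := Finset.biUnion_subset.mpr fun j hj => hsub j (hYB hj)
    have hUd : ∀ i, i ∈ U ↔ d i ≠ 0 := by
      intro i
      rw [Finset.mem_biUnion, hd]
      constructor
      · rintro ⟨j, hj, hij⟩
        exact Finset.card_ne_zero_of_mem (Finset.mem_filter.mpr ⟨hj, hij⟩)
      · intro h
        obtain ⟨j, hj⟩ := Finset.card_pos.mp (Nat.pos_of_ne_zero h)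
        rw [Finset.mem_filter] at hj
        exact ⟨j, hj.1, hj.2⟩
    have hUcard : YB.card + 2 ≤ U.card := hddag YB hYB hBne
    set A2 := V2.filter (fun i => d i = 2) with hA2
    set YWU := YW ∩ U with hYWU
    have hA2U : A2 ⊆ U := by
      intro i hi
      rw [hA2, Finset.mem_filter] at hi
      rw [hUd]
      omega
    have hSdisj : Disjoint A2 YWU := by
      rw [Finset.disjoint_left]
      intro i hi1 hi2
      have h2 : valence n Γ i = 2 := (Finset.mem_filter.mp (Finset.mem_filter.mp hi1).1).2
      have h3 : valence n Γ i = 3 :=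
        (Finset.mem_filter.mp (hYW (Finset.mem_inter.mp hi2).1)).2
      omega
    set S := A2 ∪ YWU with hS
    have hSU : S ⊆ U := Finset.union_subset hA2U Finset.inter_subset_right
    have hScard : S.card = q2 + YWU.card := by
      rw [hS, Finset.card_union_of_disjoint hSdisj, hq2, hA2]
    have hSsum : ∑ i ∈ S, d i = 2 * q2 + ∑ i ∈ YWU, d i := by
      rw [hS, Finset.sum_union hSdisj]
      have : ∀ i ∈ A2, d i = 2 := fun i hi => (Finset.mem_filter.mp hi).2
      rw [Finset.sum_congr rfl this, Finset.sum_const, smul_eq_mul, hq2, hA2, mul_comm]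
    have hsYWU : ∑ i ∈ YWU, d i = s := by
      rw [hs, hYWU]
      apply Finset.sum_subset Finset.inter_subset_left
      intro i hi hni
      have : i ∉ U := fun hiU => hni (Finset.mem_inter.mpr ⟨hi, hiU⟩)
      rw [hUd] at this
      omega
    have hUsum : ∑ i ∈ U, d i ≤ 3 * YB.card := by
      rw [← hsumd]
      exact Finset.sum_le_sum_of_subset hUI
    have hUsplit : ∑ i ∈ U \ S, d i + ∑ i ∈ S, d i = ∑ i ∈ U, d i := Finset.sum_sdiff hSU
    have hUSlb : (U \ S).card ≤ ∑ i ∈ U \ S, d i := by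
      have h1 : ∀ i ∈ U \ S, 1 ≤ d i := by
        intro i hi
        have : i ∈ U := (Finset.mem_sdiff.mp hi).1
        rw [hUd] at this
        omega
      calc (U \ S).card = (U \ S).card • 1 := by simp
        _ ≤ ∑ i ∈ U \ S, d i := Finset.card_nsmul_le_sum _ _ _ h1
    have hUScard : (U \ S).card + S.card = U.card := Finset.card_sdiff_add_card_eq_card hSU
    have hYWUle : YWU.card ≤ YW.card := Finset.card_le_card Finset.inter_subset_left
    have hkey : YW.card + 4 ≤ sharp n Γ YB YW + YB.card := by omega
    -- conclude
    have hn' : (6 : ℤ) ≤ (n : ℤ) := by exact_mod_cast hn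
    have hkey' : (YW.card : ℤ) + 4 - YB.card ≤ (sharp n Γ YB YW : ℤ) := by omega
    have hbw' : (YB.card : ℤ) + YW.card + 9 ≤ 2 * n := by exact_mod_cast hbw
    have h1 : ((n : ℤ) - 4) * ((YW.card : ℤ) + 4 - YB.card)
        ≤ ((n : ℤ) - 4) * sharp n Γ YB YW :=
      mul_le_mul_of_nonneg_left hkey' (by linarith)
    have h2 : ((n : ℤ) - 4) * ((YW.card : ℤ) + 4 - YB.card)
        = ((n : ℤ) - 2) * YW.card - ((n : ℤ) - 6) * YB.card
          + (4 * (n : ℤ) - 16 - 2 * YW.card - 2 * YB.card) := by ring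
    linarith only [h1, h2, hbw']

lemma card_W (n : ℕ) (hn : 6 ≤ n) (Γ : ℕ → Finset ℕ)
    (hsub : ∀ j ∈ Finset.Icc 1 (n - 2), Γ j ⊆ Finset.Icc 1 n)
    (hcard : ∀ j ∈ Finset.Icc 1 (n - 2), (Γ j).card = 3)
    (hval : ∀ i ∈ Finset.Icc 1 n, valence n Γ i = 2 ∨ valence n Γ i = 3) :
    ((Finset.Icc 1 n).filter fun i => valence n Γ i = 3).card = n - 6 := by
  have hcJ : (Finset.Icc 1 (n - 2)).card = n - 2 := by rw [Nat.card_Icc]; omega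
  have hcI : (Finset.Icc 1 n).card = n := by rw [Nat.card_Icc]; omega
  have hsum : ∑ i ∈ Finset.Icc 1 n, valence n Γ i = 3 * (n - 2) := by
    have := sum_deg n Γ (Finset.Icc 1 (n - 2)) hsub hcard
    rw [hcJ] at this
    exact this
  have hsplit := Finset.sum_filter_add_sum_filter_not (Finset.Icc 1 n)
    (fun i => valence n Γ i = 3) (valence n Γ)
  have h3 : ∑ i ∈ (Finset.Icc 1 n).filter (fun i => valence n Γ i = 3), valence n Γ i
      = 3 * ((Finset.Icc 1 n).filter fun i => valence n Γ i = 3).card := by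
    rw [Finset.sum_congr rfl (fun i hi => (Finset.mem_filter.mp hi).2), Finset.sum_const,
      smul_eq_mul, mul_comm]
  have h2 : ∑ i ∈ (Finset.Icc 1 n).filter (fun i => ¬ valence n Γ i = 3), valence n Γ i
      = 2 * ((Finset.Icc 1 n).filter fun i => ¬ valence n Γ i = 3).card := by
    rw [Finset.sum_congr rfl (fun i hi => ?_), Finset.sum_const, smul_eq_mul, mul_comm]
    have hi' := Finset.mem_filter.mp hi
    rcases hval i hi'.1 with h | h
    · exact h
    · exact absurd h hi'.2
  have hcc := Finset.card_filter_add_card_filter_not (s := Finset.Icc 1 n)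
    (p := fun i => valence n Γ i = 3)
  rw [hcI] at hcc
  omega

lemma sharp_compl (n : ℕ) (Γ : ℕ → Finset ℕ) (YB YW : Finset ℕ)
    (hYB : YB ⊆ Finset.Icc 1 (n - 2)) :
    sharp n Γ YB YW = sharp n Γ (Finset.Icc 1 (n - 2) \ YB)
      (((Finset.Icc 1 n).filter fun i => valence n Γ i = 3) \ YW) := by
  unfold sharp
  congr 1
  · refine congrArg Finset.card ?_
    ext i
    simp only [Finset.mem_filter]
    constructor
    · rintro ⟨hiI, h2, ⟨j1, hj1, hi1, hb1⟩, ⟨j2, hj2, hi2, hb2⟩⟩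
      exact ⟨hiI, h2, ⟨j2, hj2, hi2, Finset.mem_sdiff.mpr ⟨hj2, hb2⟩⟩,
        ⟨j1, hj1, hi1, fun hc => (Finset.mem_sdiff.mp hc).2 hb1⟩⟩
    · rintro ⟨hiI, h2, ⟨j1, hj1, hi1, hb1⟩, ⟨j2, hj2, hi2, hb2⟩⟩
      have hb1' : j1 ∉ YB := (Finset.mem_sdiff.mp hb1).2
      have hb2' : j2 ∈ YB := by
        by_contra hc
        exact hb2 (Finset.mem_sdiff.mpr ⟨hj2, hc⟩)
      exact ⟨hiI, h2, ⟨j2, hj2, hi2, hb2'⟩, ⟨j1, hj1, hi1, hb1'⟩⟩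
  · refine congrArg Finset.card ?_
    ext p
    simp only [Finset.mem_filter, Finset.mem_product]
    constructor
    · rintro ⟨hp, h3, hg, hc⟩
      refine ⟨hp, h3, hg, ?_⟩
      rcases hc with ⟨hw, hb⟩ | ⟨hw, hb⟩
      · exact Or.inr ⟨fun hx => (Finset.mem_sdiff.mp hx).2 hw, Finset.mem_sdiff.mpr ⟨hp.2, hb⟩⟩
      · exact Or.inl ⟨Finset.mem_sdiff.mpr ⟨Finset.mem_filter.mpr ⟨hp.1, h3⟩, hw⟩,
          fun hx => (Finset.mem_sdiff.mp hx).2 hb⟩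
    · rintro ⟨hp, h3, hg, hc⟩
      refine ⟨hp, h3, hg, ?_⟩
      rcases hc with ⟨hw, hb⟩ | ⟨hw, hb⟩
      · have hw' : p.1 ∉ YW := (Finset.mem_sdiff.mp hw).2
        have hb' : p.2 ∈ YB := by
          by_contra hcc
          exact hb (Finset.mem_sdiff.mpr ⟨hp.2, hcc⟩)
        exact Or.inr ⟨hw', hb'⟩
      · have hw' : p.1 ∈ YW := by
          by_contra hcc
          exact hw (Finset.mem_sdiff.mpr ⟨Finset.mem_filter.mpr ⟨hp.1, h3⟩, hcc⟩)
        have hb' : p.2 ∉ YB := (Finset.mem_sdiff.mp hb).2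
        exact Or.inl ⟨hw', hb'⟩

/-- Gieseker's basic inequality for the stable hypergraph curve: for a 3-uniform
hypergraph `Γ_1,…,Γ_{n-2}` on `{1,…,n}` with all valences 2 or 3 satisfying (‡), and
for every subset `Y = (YB, YW)` of the black and white vertices with
`∅ ≠ Y ≠ B ⊔ W`, one has `|(n−2)·w(Y) − (n−6)·b(Y)| < (n−4)·#(Y)`. -/
theorem gieseker_strict_inequality (n : ℕ) (hn : 6 ≤ n) (Γ : ℕ → Finset ℕ)
    (hsub : ∀ j ∈ Finset.Icc 1 (n - 2), Γ j ⊆ Finset.Icc 1 n)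
    (hcard : ∀ j ∈ Finset.Icc 1 (n - 2), (Γ j).card = 3)
    (hval : ∀ i ∈ Finset.Icc 1 n, valence n Γ i = 2 ∨ valence n Γ i = 3)
    (hddag : ∀ S ⊆ Finset.Icc 1 (n - 2), S.Nonempty →
      S.card + 2 ≤ (S.biUnion Γ).card)
    (YB YW : Finset ℕ)
    (hYB : YB ⊆ Finset.Icc 1 (n - 2))
    (hYW : YW ⊆ (Finset.Icc 1 n).filter fun i => valence n Γ i = 3)
    (hne : ¬(YB = ∅ ∧ YW = ∅))
    (hne' : ¬(YB = Finset.Icc 1 (n - 2) ∧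
      YW = (Finset.Icc 1 n).filter fun i => valence n Γ i = 3)) :
    |((n : ℤ) - 2) * YW.card - ((n : ℤ) - 6) * YB.card| <
      ((n : ℤ) - 4) * sharp n Γ YB YW := by
  classical
  have hW : ((Finset.Icc 1 n).filter fun i => valence n Γ i = 3).card = n - 6 :=
    card_W n hn Γ hsub hcard hval
  have hcJ : (Finset.Icc 1 (n - 2)).card = n - 2 := by rw [Nat.card_Icc]; omega
  have hb : YB.card ≤ n - 2 := by rw [← hcJ]; exact Finset.card_le_card hYB
  have hw : YW.card ≤ n - 6 := by rw [← hW]; exact Finset.card_le_card hYW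
  have hbw : YB.card + YW.card + 9 ≤ 2 * n := by
    by_contra hc
    exact hne' ⟨Finset.eq_of_subset_of_card_le hYB (by omega),
      Finset.eq_of_subset_of_card_le hYW (by omega)⟩
  have hwpos : YB = ∅ → YW.Nonempty := by
    intro h
    rcases Finset.eq_empty_or_nonempty YW with h' | h'
    · exact absurd ⟨h, h'⟩ hne
    · exact h'
  have h1 := one_sided n hn Γ hsub hcard hval hddag YB YW hYB hYW hbw hwpos
  have hYBc' : Finset.Icc 1 (n - 2) \ YB ⊆ Finset.Icc 1 (n - 2) := Finset.sdiff_subset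
  have hYWc' : (((Finset.Icc 1 n).filter fun i => valence n Γ i = 3) \ YW)
      ⊆ (Finset.Icc 1 n).filter fun i => valence n Γ i = 3 := Finset.sdiff_subset
  have hbc : (Finset.Icc 1 (n - 2) \ YB).card = n - 2 - YB.card := by
    rw [Finset.card_sdiff_of_subset hYB, hcJ]
  have hwc : ((((Finset.Icc 1 n).filter fun i => valence n Γ i = 3)) \ YW).card
      = n - 6 - YW.card := by
    rw [Finset.card_sdiff_of_subset hYW, hW]
  have hbwc : (Finset.Icc 1 (n - 2) \ YB).card
      + ((((Finset.Icc 1 n).filter fun i => valence n Γ i = 3)) \ YW).card + 9 ≤ 2 * n := by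
    by_contra hc
    have hb0 : YB.card = 0 := by omega
    have hw0 : YW.card = 0 := by omega
    exact hne ⟨Finset.card_eq_zero.mp hb0, Finset.card_eq_zero.mp hw0⟩
  have hwposc : Finset.Icc 1 (n - 2) \ YB = ∅ →
      ((((Finset.Icc 1 n).filter fun i => valence n Γ i = 3)) \ YW).Nonempty := by
    intro h
    have hc0 : (Finset.Icc 1 (n - 2) \ YB).card = 0 := by rw [h]; rfl
    have hYBJ : YB = Finset.Icc 1 (n - 2) :=
      Finset.eq_of_subset_of_card_le hYB (by omega)
    rw [Finset.nonempty_iff_ne_empty]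
    intro h'
    have hc1 : ((((Finset.Icc 1 n).filter fun i => valence n Γ i = 3)) \ YW).card = 0 := by
      rw [h']; rfl
    exact hne' ⟨hYBJ, (Finset.eq_of_subset_of_card_le hYW (by omega)).symm ▸ rfl⟩
  have h2 := one_sided n hn Γ hsub hcard hval hddag
    (Finset.Icc 1 (n - 2) \ YB) ((((Finset.Icc 1 n).filter fun i => valence n Γ i = 3)) \ YW)
    hYBc' hYWc' hbwc hwposc
  rw [← sharp_compl n Γ YB YW hYB] at h2
  have hbcZ : (((Finset.Icc 1 (n - 2) \ YB).card : ℤ)) = (n : ℤ) - 2 - YB.card := by omega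
  have hwcZ : ((((((Finset.Icc 1 n).filter fun i => valence n Γ i = 3)) \ YW).card : ℤ))
      = (n : ℤ) - 6 - YW.card := by omega
  rw [hbcZ, hwcZ] at h2
  have hexp : ((n : ℤ) - 2) * ((n : ℤ) - 6 - YW.card)
      - ((n : ℤ) - 6) * ((n : ℤ) - 2 - YB.card)
      = -(((n : ℤ) - 2) * YW.card - ((n : ℤ) - 6) * YB.card) := by ring
  rw [hexp] at h2
  rw [abs_lt]
  exact ⟨by linarith, h1⟩
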